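/- Let G be a finite group and m > 1. If g, h ∈ G^m \ {e} are adjacent in the Cayley graph Cay(G^m, S) (i.e. h = s·g for some s ∈ S), then |ϑ(g) − ϑ(h)| ≤ 2, where ϑ denotes the weight (number of blocks in the canonical interval decomposition). -/

import Mathlib

namespace CayleyStmt2

variable {G : Type*}

def intvl [Group G] (m : ℕ) (x : G) (k l : ℕ) : Fin m → G :=
  fun i => if k ≤ i.1 + 1 ∧ i.1 + 1 < l then x else 1

def cS (G : Type*) [Group G] (m : ℕ) : Set (Fin m → G) :=
  {v | ∃ (x : G) (k l : ℕ), x ≠ 1 ∧ 1 ≤ k ∧ k < l ∧ l ≤ m + 1 ∧ v = intvl m x k l}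

/-- Adjacency in the Cayley graph `Cay(G^m, S)`. -/
def cAdj [Group G] (m : ℕ) (g h : Fin m → G) : Prop := h * g⁻¹ ∈ cS G m

/-- The canonical weight decomposition of a nonidentity element of `G^m`. -/
def GoodDecomp [Group G] (m : ℕ) (g : Fin m → G)
    (d : Σ k : ℕ, (Fin (k + 1) → ℕ) × (Fin k → G)) : Prop :=
  0 < d.1 ∧
  StrictMono d.2.1 ∧
  1 ≤ d.2.1 0 ∧
  d.2.1 (Fin.last d.1) ≤ m + 1 ∧
  (∀ h : 0 < d.1, d.2.2 ⟨0, h⟩ ≠ 1) ∧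
  (∀ h : 0 < d.1, d.2.2 ⟨d.1 - 1, by omega⟩ ≠ 1) ∧
  (∀ j : ℕ, ∀ h : j + 1 < d.1, d.2.2 ⟨j, by omega⟩ ≠ d.2.2 ⟨j + 1, h⟩) ∧
  g = (List.ofFn fun j : Fin d.1 =>
        intvl m (d.2.2 j) (d.2.1 j.castSucc) (d.2.1 j.succ)).prod

/-! ### Auxiliary development -/

/-- The boundary-extended sequence of `g`: `bseq m g 0 = 1`, `bseq m g p = g (p-1)` for
`1 ≤ p ≤ m`, and `bseq m g p = 1` for `p > m`. -/
def bseq [Group G] (m : ℕ) (g : Fin m → G) (p : ℕ) : G :=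
  if h : 1 ≤ p ∧ p ≤ m then g ⟨p - 1, by omega⟩ else 1

open Classical in
/-- Number of change points of the boundary-extended sequence. -/
noncomputable def Nw [Group G] (m : ℕ) (g : Fin m → G) : ℕ :=
  ((Finset.range (m + 1)).filter (fun p => bseq m g p ≠ bseq m g (p + 1))).card

lemma list_prod_apply [Group G] {m : ℕ} (L : List (Fin m → G)) (i : Fin m) :
    L.prod i = (L.map (fun f => f i)).prod := by
  induction L with
  | nil => rfl
  | cons a l ih => simp [ih, Pi.mul_apply]

lemma prod_ofFn_eq_single [Group G] {k : ℕ} (v : Fin k → G) (j : Fin k)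
    (hj : ∀ j', j' ≠ j → v j' = 1) : (List.ofFn v).prod = v j := by
  induction k with
  | zero => exact absurd j.2 (by omega)
  | succ n ih =>
      rw [List.ofFn_succ]
      rcases Fin.eq_zero_or_eq_succ j with rfl | ⟨j', rfl⟩
      · have : ∀ y ∈ List.ofFn (fun i : Fin n => v i.succ), y = 1 := by
          intro y hy
          rw [List.mem_ofFn] at hy
          obtain ⟨i, rfl⟩ := hy
          exact hj _ (Fin.succ_ne_zero i)
        rw [List.prod_cons, List.prod_eq_one this, mul_one]
      · have h0 : v 0 = 1 := hj 0 (Fin.succ_ne_zero j').symm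
        rw [List.prod_cons, h0, one_mul]
        exact ih (fun i => v i.succ) j' (fun i hi => hj _ (by
          simpa [Fin.succ_inj] using hi))

section Decomp

variable [Group G] {m k : ℕ} {g : Fin m → G} {f : Fin (k + 1) → ℕ} {x : Fin k → G}

/-- Unpacked hypotheses of a good decomposition. -/
structure GD (m : ℕ) (g : Fin m → G) (k : ℕ) (f : Fin (k + 1) → ℕ) (x : Fin k → G) :
    Prop where
  hk : 0 < k
  hmono : StrictMono f
  h0 : 1 ≤ f 0
  hlast : f (Fin.last k) ≤ m + 1
  hx0 : x ⟨0, hk⟩ ≠ 1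
  hxlast : x ⟨k - 1, by omega⟩ ≠ 1
  hcons : ∀ j : ℕ, ∀ h : j + 1 < k, x ⟨j, by omega⟩ ≠ x ⟨j + 1, h⟩
  hprod : g = (List.ofFn fun j : Fin k =>
        intvl m (x j) (f j.castSucc) (f j.succ)).prod

lemma gd_of_good (hd : GoodDecomp m g ⟨k, f, x⟩) : GD m g k f x := by
  obtain ⟨h1, h2, h3, h4, h5, h6, h7, h8⟩ := hd
  exact ⟨h1, h2, h3, h4, h5 h1, h6 h1, h7, h8⟩

lemma bseq_eq_block (hd : GD m g k f x) (j : Fin k) (p : ℕ)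
    (h1 : f j.castSucc ≤ p) (h2 : p < f j.succ) : bseq m g p = x j := by
  have hf0 : f 0 ≤ f j.castSucc := hd.hmono.monotone (Fin.zero_le _)
  have hfl : f j.succ ≤ f (Fin.last k) := hd.hmono.monotone (Fin.le_last _)
  have hp1 : 1 ≤ p := le_trans hd.h0 (le_trans hf0 h1)
  have hpm : p ≤ m := by have := hd.hlast; omega
  rw [bseq, dif_pos ⟨hp1, hpm⟩, hd.hprod, list_prod_apply, List.map_ofFn]
  simp only [Function.comp_def]
  rw [prod_ofFn_eq_single _ j ?_]
  · simp only [intvl]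
    rw [if_pos]
    constructor <;> omega
  · intro j' hj'
    simp only [intvl]
    rw [if_neg]
    rintro ⟨ha, hb⟩
    rcases lt_or_gt_of_ne hj' with hlt | hgt
    · have hv : j'.1 < j.1 := hlt
      have : f j'.succ ≤ f j.castSucc := hd.hmono.monotone (by
        rw [Fin.le_def]; simp only [Fin.val_succ, Fin.coe_castSucc]; omega)
      omega
    · have hv : j.1 < j'.1 := hgt
      have : f j.succ ≤ f j'.castSucc := hd.hmono.monotone (by
        rw [Fin.le_def]; simp only [Fin.val_succ, Fin.coe_castSucc]; omega)
      omega

lemma bseq_eq_one_out (hd : GD m g k f x) (p : ℕ)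
    (h : p < f 0 ∨ f (Fin.last k) ≤ p) : bseq m g p = 1 := by
  by_cases hp : 1 ≤ p ∧ p ≤ m
  · rw [bseq, dif_pos hp, hd.hprod, list_prod_apply, List.map_ofFn]
    apply List.prod_eq_one
    intro y hy
    rw [List.mem_ofFn] at hy
    obtain ⟨j, rfl⟩ := hy
    simp only [Function.comp, intvl]
    rw [if_neg]
    rintro ⟨ha, hb⟩
    have hf0 : f 0 ≤ f j.castSucc := hd.hmono.monotone (Fin.zero_le _)
    have hfl : f j.succ ≤ f (Fin.last k) := hd.hmono.monotone (Fin.le_last _)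
    omega
  · rw [bseq, dif_neg hp]

lemma exists_block (hd : GD m g k f x) (p : ℕ) (h1 : f 0 ≤ p) (h2 : p < f (Fin.last k)) :
    ∃ j : Fin k, f j.castSucc ≤ p ∧ p < f j.succ := by
  classical
  set S : Finset (Fin k) := Finset.univ.filter (fun j => f j.castSucc ≤ p) with hS
  have h0S : (⟨0, hd.hk⟩ : Fin k) ∈ S := by
    simp only [hS, Finset.mem_filter, Finset.mem_univ, true_and]
    have : ((⟨0, hd.hk⟩ : Fin k).castSucc) = 0 := by ext; rfl
    rw [this]; exact h1
  have hne : S.Nonempty := ⟨_, h0S⟩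
  obtain ⟨j, hjS, hjmax⟩ := S.exists_max_image id hne
  simp only [hS, Finset.mem_filter] at hjS
  refine ⟨j, hjS.2, ?_⟩
  by_contra hcon
  push_neg at hcon
  by_cases hjk : j.1 + 1 < k
  · have hmem : (⟨j.1 + 1, hjk⟩ : Fin k) ∈ S := by
      simp only [hS, Finset.mem_filter, Finset.mem_univ, true_and]
      have : ((⟨j.1 + 1, hjk⟩ : Fin k).castSucc) = j.succ := by ext; rfl
      rw [this]; exact hcon
    have := hjmax _ hmem
    simp only [id] at this
    rw [Fin.le_def] at this
    simp at this
  · have : j.succ = Fin.last k := by ext; simp; omega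
    rw [this] at hcon
    omega

lemma Nw_eq (hd : GD m g k f x) : Nw m g = k + 1 := by
  classical
  have hk0 : 0 < k := hd.hk
  have hinj : Function.Injective f := hd.hmono.injective
  have hge1 : ∀ j, 1 ≤ f j := fun j => le_trans hd.h0 (hd.hmono.monotone (Fin.zero_le _))
  have hlem : ∀ j, f j ≤ m + 1 := fun j => le_trans (hd.hmono.monotone (Fin.le_last _)) hd.hlast
  have hset : (Finset.range (m + 1)).filter (fun p => bseq m g p ≠ bseq m g (p + 1))
      = Finset.univ.image (fun j : Fin (k + 1) => f j - 1) := by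
    ext p
    simp only [Finset.mem_filter, Finset.mem_range, Finset.mem_image, Finset.mem_univ,
      true_and]
    constructor
    · rintro ⟨hpm, hne⟩
      by_contra hcon
      push_neg at hcon
      have hcon' : ∀ j, f j ≠ p + 1 := by
        intro j hj
        exact hcon j (by omega)
      apply hne
      by_cases hc1 : p + 1 < f 0
      · rw [bseq_eq_one_out hd p (Or.inl (by omega)),
          bseq_eq_one_out hd (p + 1) (Or.inl hc1)]
      · by_cases hc2 : f (Fin.last k) ≤ p + 1
        · have : f (Fin.last k) ≤ p := by
            have := hcon' (Fin.last k); omega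
          rw [bseq_eq_one_out hd p (Or.inr this),
            bseq_eq_one_out hd (p + 1) (Or.inr hc2)]
        · obtain ⟨j, hja, hjb⟩ := exists_block hd (p + 1) (by omega) (by omega)
          have hja' : f j.castSucc ≤ p := by
            have := hcon' j.castSucc; omega
          rw [bseq_eq_block hd j p hja' (by omega),
            bseq_eq_block hd j (p + 1) (by omega) hjb]
    · rintro ⟨j, rfl⟩
      have hj1 : 1 ≤ f j := hge1 j
      have hjp : f j - 1 + 1 = f j := by omega
      refine ⟨by have := hlem j; omega, ?_⟩
      rw [hjp]
      by_cases hjk : j.1 < k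
      · -- p + 1 = f j with j < k : right value is x ⟨j.1, hjk⟩
        have hcast : (⟨j.1, hjk⟩ : Fin k).castSucc = j := by ext; rfl
        have hr : bseq m g (f j) = x ⟨j.1, hjk⟩ := by
          apply bseq_eq_block hd ⟨j.1, hjk⟩
          · rw [hcast]
          · exact hd.hmono (by rw [Fin.lt_def]; simp)
        rw [hr]
        rcases Nat.eq_zero_or_pos j.1 with hz | hpos
        · have hj0 : j = 0 := by ext; exact hz
          have hl : bseq m g (f j - 1) = 1 := by
            apply bseq_eq_one_out hd _ (Or.inl ?_)
            have := hd.h0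
            rw [hj0]
            omega
          rw [hl]
          have : (⟨j.1, hjk⟩ : Fin k) = ⟨0, hd.hk⟩ := by ext; exact hz
          rw [this]
          exact fun hh => hd.hx0 hh.symm
        · -- j.1 = j'' + 1
          have hj'k : j.1 - 1 < k := by omega
          have hsucc : (⟨j.1 - 1, hj'k⟩ : Fin k).succ = j := by ext; simp; omega
          have hl : bseq m g (f j - 1) = x ⟨j.1 - 1, hj'k⟩ := by
            apply bseq_eq_block hd ⟨j.1 - 1, hj'k⟩
            · have : f (⟨j.1 - 1, hj'k⟩ : Fin k).castSucc < f j := by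
                apply hd.hmono
                rw [Fin.lt_def]
                simp only [Fin.coe_castSucc]
                omega
              omega
            · rw [hsucc]; omega
          rw [hl]
          have := hd.hcons (j.1 - 1) (by omega)
          have heq1 : (⟨j.1 - 1 + 1, by omega⟩ : Fin k) = ⟨j.1, hjk⟩ := by ext; simp; omega
          rw [heq1] at this
          exact this
      · -- j = last
        have hjl : j = Fin.last k := by ext; simp; omega
        have hr : bseq m g (f j) = 1 := by
          apply bseq_eq_one_out hd _ (Or.inr (by rw [hjl]))
        rw [hr]
        have hlk : (⟨k - 1, by omega⟩ : Fin k).succ = Fin.last k := by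
          ext; simp; omega
        have hl : bseq m g (f j - 1) = x ⟨k - 1, by omega⟩ := by
          apply bseq_eq_block hd ⟨k - 1, by omega⟩
          · have : f (⟨k - 1, by omega⟩ : Fin k).castSucc < f (Fin.last k) := by
              apply hd.hmono
              rw [Fin.lt_def]
              simp
              omega
            have hjv : f j = f (Fin.last k) := by rw [hjl]
            omega
          · have hjv : f (⟨k - 1, by omega⟩ : Fin k).succ = f j := by rw [hlk, hjl]
            omega
        rw [hl]
        exact hd.hxlast
  rw [Nw]
  rw [Finset.filter_congr (fun p _ => Iff.rfl), hset]
  rw [Finset.card_image_of_injective _ ?_, Finset.card_univ, Fintype.card_fin]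
  intro a b hab
  apply hinj
  have := hge1 a
  have := hge1 b
  simp only at hab
  omega

end Decomp

section Adj

variable [Group G] {m : ℕ}

lemma bseq_mul (g : Fin m → G) (x : G) (k l : ℕ) (hk : 1 ≤ k) (hl : l ≤ m + 1)
    (p : ℕ) :
    bseq m (intvl m x k l * g) p = (if k ≤ p ∧ p < l then x else 1) * bseq m g p := by
  by_cases hp : 1 ≤ p ∧ p ≤ m
  · rw [bseq, bseq, dif_pos hp, dif_pos hp, Pi.mul_apply, intvl]
    have : p - 1 + 1 = p := by omega
    rw [this]
  · rw [bseq, bseq, dif_neg hp, dif_neg hp, mul_one]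
    rw [if_neg (by omega)]

lemma Nw_mul_le (g : Fin m → G) (x : G) (k l : ℕ) (hk : 1 ≤ k) (hkl : k < l)
    (hl : l ≤ m + 1) : Nw m (intvl m x k l * g) ≤ Nw m g + 2 := by
  classical
  rw [Nw, Nw]
  have hsub : (Finset.range (m + 1)).filter
      (fun p => bseq m (intvl m x k l * g) p ≠ bseq m (intvl m x k l * g) (p + 1)) ⊆
      ((Finset.range (m + 1)).filter (fun p => bseq m g p ≠ bseq m g (p + 1))) ∪
        {k - 1, l - 1} := by
    intro p hp
    simp only [Finset.mem_filter, Finset.mem_range] at hp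
    obtain ⟨hpm, hne⟩ := hp
    rw [Finset.mem_union, Finset.mem_insert, Finset.mem_singleton]
    by_cases hpk : p = k - 1
    · exact Or.inr (Or.inl hpk)
    by_cases hpl : p = l - 1
    · exact Or.inr (Or.inr hpl)
    left
    simp only [Finset.mem_filter, Finset.mem_range]
    refine ⟨hpm, ?_⟩
    intro heq
    apply hne
    rw [bseq_mul g x k l hk hl, bseq_mul g x k l hk hl]
    have hk1 : p + 1 ≠ k := by omega
    have hl1 : p + 1 ≠ l := by omega
    by_cases hc : k ≤ p ∧ p < l
    · rw [if_pos hc, if_pos (by omega), heq]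
    · rw [if_neg hc, if_neg (by omega), heq]
  calc ((Finset.range (m + 1)).filter
      (fun p => bseq m (intvl m x k l * g) p ≠ bseq m (intvl m x k l * g) (p + 1))).card
      ≤ (((Finset.range (m + 1)).filter (fun p => bseq m g p ≠ bseq m g (p + 1))) ∪
        ({k - 1, l - 1} : Finset ℕ)).card := Finset.card_le_card hsub
    _ ≤ ((Finset.range (m + 1)).filter (fun p => bseq m g p ≠ bseq m g (p + 1))).card
        + ({k - 1, l - 1} : Finset ℕ).card := Finset.card_union_le _ _
    _ ≤ _ := by
        have : ({k - 1, l - 1} : Finset ℕ).card ≤ 2 := by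
          apply le_trans (Finset.card_insert_le _ _)
          simp
        omega

end Adj

/-- If `g, h ∈ G^m \ {e}` are adjacent in `Cay(G^m, S)`, then their weights
differ by at most `2`. -/
theorem weight_diff_le_two [Group G] [Fintype G] (m : ℕ) (hm : 1 < m)
    (g h : Fin m → G) (hg : g ≠ 1) (hh : h ≠ 1)
    (dg dh : Σ k : ℕ, (Fin (k + 1) → ℕ) × (Fin k → G))
    (hdg : GoodDecomp m g dg) (hdh : GoodDecomp m h dh)
    (hadj : cAdj m g h) :
    |(dg.1 : ℤ) - (dh.1 : ℤ)| ≤ 2 := by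
  obtain ⟨kg, fg, xg⟩ := dg
  obtain ⟨kh, fh, xh⟩ := dh
  have hGg := gd_of_good hdg
  have hGh := gd_of_good hdh
  have hNg : Nw m g = kg + 1 := Nw_eq hGg
  have hNh : Nw m h = kh + 1 := Nw_eq hGh
  obtain ⟨x, k, l, hx, hk, hkl, hl, hs⟩ := hadj
  have hhg : h = intvl m x k l * g := by
    rw [← hs]; group
  have hgh : g = intvl m x⁻¹ k l * h := by
    have : intvl m x⁻¹ k l = (intvl m x k l)⁻¹ := by
      funext i
      simp only [intvl, Pi.inv_apply]
      split <;> simp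
    rw [this, hhg]; group
  have h1 : Nw m h ≤ Nw m g + 2 := by
    rw [hhg]; exact Nw_mul_le g x k l hk hkl hl
  have h2 : Nw m g ≤ Nw m h + 2 := by
    rw [hgh]; exact Nw_mul_le h x⁻¹ k l hk hkl hl
  simp only []
  rw [abs_le]
  constructor <;> [skip; skip] <;> omega

end CayleyStmt2
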